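/- Property B is an invariant of conjugacy of flows: if {F_t} on (X,𝔅,μ) has Property B, and {F'_t} on (X',𝔅',μ') is conjugate to {F_t} (i.e., there is an isomorphism T : X' → X with μ' equivalent to μ∘T^{-1} and F_t(T x) = T(F'_t(x)) for all t and a.e. x), then {F'_t} has Property B. -/

import Mathlib

open MeasureTheory Filter Set
open scoped ENNReal Topology

/-- The return set `Λ_{F,δ,s}(A)` of a flow `F`. -/
def lamSet {X : Type*} (F : ℝ → X → X) (A : Set X) (δ s : ℝ) : Set X :=
  {x | x ∈ A ∧ ∃ t : ℝ, Real.exp (s - δ) < |t| ∧ |t| < Real.exp (s + δ) ∧ F t x ∈ A}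

/-- Property B of a flow `F` on a measure space `(X, μ)`. -/
def PropertyB {X : Type*} [MeasurableSpace X] (μ : Measure X) (F : ℝ → X → X) : Prop :=
  ∃ A : Set X, MeasurableSet A ∧ 0 < μ A ∧
    ∀ δ : ℝ, 0 < δ → limsup (fun s : ℝ => μ (lamSet F A δ s)) atTop = 0


/-- Inside any set of positive measure we can find a measurable subset of positive `μ`-measure
which has finite measure for both `μ` and `ν`. -/
lemma exists_good_subset {X : Type*} [MeasurableSpace X] (μ ν : Measure X)
    [SigmaFinite μ] [SigmaFinite ν] {A : Set X} (hA : MeasurableSet A) (h : 0 < μ A) :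
    ∃ B : Set X, MeasurableSet B ∧ B ⊆ A ∧ 0 < μ B ∧ μ B < ∞ ∧ ν B < ∞ := by
  set B : ℕ → Set X := fun n => A ∩ spanningSets μ n ∩ spanningSets ν n with hBdef
  have hcover : A = ⋃ n, B n := by
    apply Subset.antisymm
    · intro x hx
      obtain ⟨n1, hn1⟩ : ∃ n, x ∈ spanningSets μ n := by
        have h1 : x ∈ ⋃ n, spanningSets μ n := by rw [iUnion_spanningSets]; trivial
        exact mem_iUnion.1 h1
      obtain ⟨n2, hn2⟩ : ∃ n, x ∈ spanningSets ν n := by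
        have h1 : x ∈ ⋃ n, spanningSets ν n := by rw [iUnion_spanningSets]; trivial
        exact mem_iUnion.1 h1
      refine mem_iUnion.2 ⟨max n1 n2, ⟨⟨hx, ?_⟩, ?_⟩⟩
      · exact monotone_spanningSets μ (le_max_left _ _) hn1
      · exact monotone_spanningSets ν (le_max_right _ _) hn2
    · exact iUnion_subset fun n => fun x hx => hx.1.1
  have hex : ∃ n, 0 < μ (B n) := by
    by_contra hc
    push_neg at hc
    have : μ A = 0 := by
      rw [hcover]
      exact measure_iUnion_null fun n => le_antisymm (hc n) zero_le
    exact absurd this (ne_of_gt h)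
  obtain ⟨n, hn⟩ := hex
  refine ⟨B n, ?_, fun x hx => hx.1.1, hn, ?_, ?_⟩
  · exact ((hA.inter (measurableSet_spanningSets μ n)).inter (measurableSet_spanningSets ν n))
  · exact lt_of_le_of_lt (measure_mono (fun x hx => hx.1.2)) (measure_spanningSets_lt_top μ n)
  · exact lt_of_le_of_lt (measure_mono (fun x hx => hx.2)) (measure_spanningSets_lt_top ν n)


/-- Sojourn lemma: for a nonsingular jointly measurable flow on a σ-finite space, a set of
positive measure contains a positive measure set of points that spend a positive amount of
time in it during the time interval `[0,1]`. -/
lemma sojourn_pos {X' : Type*} [MeasurableSpace X'] (μ' : Measure X') [SigmaFinite μ']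
    (F' : ℝ → X' → X')
    (hF'meas : Measurable (fun p : ℝ × X' => F' p.1 p.2))
    (hF'0 : ∀ x, F' 0 x = x)
    (hF'add : ∀ s t : ℝ, ∀ x, F' (s + t) x = F' s (F' t x))
    (hF'ns : ∀ t : ℝ, Measure.QuasiMeasurePreserving (F' t) μ' μ')
    {P : Set X'} (hPm : MeasurableSet P) (hP : 0 < μ' P) :
    0 < μ' {x | x ∈ P ∧ 0 < volume {ρ | ρ ∈ Icc (0:ℝ) 1 ∧ F' ρ x ∈ P}} := by
  -- basic facts about the flow maps
  have hFm : ∀ t : ℝ, Measurable (F' t) := fun t =>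
    hF'meas.comp (measurable_const.prodMk measurable_id)
  have hflowinv : ∀ (b : ℝ) (S : Set X'), μ' S = 0 → μ' (F' b ⁻¹' S) = 0 :=
    fun b S h => (hF'ns b).preimage_null h
  have hcancel : ∀ (b : ℝ) (S : Set X'), F' b ⁻¹' (F' (-b) ⁻¹' S) = S := by
    intro b S
    ext x
    simp only [mem_preimage]
    rw [← hF'add (-b) b x]
    simp [hF'0]
  have hpreP : ∀ b : ℝ, 0 < μ' (F' b ⁻¹' P) := by
    intro b
    rcases eq_or_lt_of_le (zero_le (a := μ' (F' b ⁻¹' P))) with h | h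
    · exfalso
      have h0 : μ' (F' (-b) ⁻¹' (F' b ⁻¹' P)) = 0 := hflowinv _ _ h.symm
      rw [show F' (-b) ⁻¹' (F' b ⁻¹' P) = P from ?_] at h0
      · exact absurd h0 (ne_of_gt hP)
      · ext x
        simp only [mem_preimage]
        rw [← hF'add b (-b) x]
        simp [hF'0]
    · exact h
  by_contra hcon
  have hS0 : μ' {x | x ∈ P ∧ 0 < volume {ρ | ρ ∈ Icc (0:ℝ) 1 ∧ F' ρ x ∈ P}} = 0 :=
    le_antisymm (not_lt.1 hcon) zero_le
  -- the product set
  set W : Set (X' × ℝ) := {p | p.1 ∈ P ∧ p.2 ∈ Icc (0:ℝ) 1 ∧ F' p.2 p.1 ∈ P} with hWdef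
  have hWm : MeasurableSet W := by
    have h1 : MeasurableSet {p : X' × ℝ | p.1 ∈ P} := measurable_fst hPm
    have h2 : MeasurableSet {p : X' × ℝ | p.2 ∈ Icc (0:ℝ) 1} := measurable_snd measurableSet_Icc
    have h3 : MeasurableSet {p : X' × ℝ | F' p.2 p.1 ∈ P} :=
      (hF'meas.comp measurable_swap) hPm
    exact h1.inter (h2.inter h3)
  have hsect1 : ∀ x : X', Prod.mk x ⁻¹' W = {ρ | x ∈ P ∧ ρ ∈ Icc (0:ℝ) 1 ∧ F' ρ x ∈ P} := by
    intro x; rfl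
  -- the product measure of W vanishes
  have hW0 : (μ'.prod volume) W = 0 := by
    rw [Measure.prod_apply hWm]
    have hz : (fun x => volume (Prod.mk x ⁻¹' W)) =ᵐ[μ'] 0 := by
      have hae : ∀ᵐ x ∂μ', x ∉ {x | x ∈ P ∧ 0 < volume {ρ | ρ ∈ Icc (0:ℝ) 1 ∧ F' ρ x ∈ P}} :=
        measure_eq_zero_iff_ae_notMem.1 hS0
      filter_upwards [hae] with x hx
      show volume (Prod.mk x ⁻¹' W) = 0
      by_cases hxP : x ∈ P
      · have hlt : ¬ 0 < volume {ρ | ρ ∈ Icc (0:ℝ) 1 ∧ F' ρ x ∈ P} := fun hc => hx ⟨hxP, hc⟩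
        have h0 : volume {ρ | ρ ∈ Icc (0:ℝ) 1 ∧ F' ρ x ∈ P} = 0 :=
          le_antisymm (not_lt.1 hlt) zero_le
        refine measure_mono_null ?_ h0
        rw [hsect1 x]
        intro ρ hρ
        exact ⟨hρ.2.1, hρ.2.2⟩
      · have hempty : Prod.mk x ⁻¹' W = (∅ : Set ℝ) := by
          rw [hsect1 x]
          ext ρ
          simp only [mem_setOf_eq, mem_empty_iff_false, iff_false]
          exact fun hc => hxP hc.1
        rw [hempty]
        exact measure_empty
    rw [lintegral_congr_ae hz]
    simp
  -- hence almost every time slice is null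
  have hsect : ∀ᵐ ρ ∂(volume : Measure ℝ), μ' ((fun x => (x, ρ)) ⁻¹' W) = 0 := by
    have h := Measure.prod_apply_symm (μ := μ') (ν := volume) hWm
    rw [hW0] at h
    exact (lintegral_eq_zero_iff (measurable_measure_prodMk_right hWm)).1 h.symm
  set N : Set ℝ := {ρ | ¬ μ' ((fun x => (x, ρ)) ⁻¹' W) = 0} with hNdef
  have hN : volume N = 0 := hsect
  have hlag : ∀ ρ ∈ Icc (0:ℝ) 1, ρ ∉ N → μ' (P ∩ F' ρ ⁻¹' P) = 0 := by
    intro ρ hρ hρN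
    have : (fun x => (x, ρ)) ⁻¹' W = P ∩ F' ρ ⁻¹' P := by
      ext x
      simp only [mem_preimage, mem_inter_iff, hWdef, mem_setOf_eq]
      exact ⟨fun h => ⟨h.1, h.2.2⟩, fun h => ⟨h.1, hρ, h.2⟩⟩
    have h0 := not_not.1 (fun hc => hρN hc)
    rwa [this] at h0
  -- pairwise disjointness of the flow images
  have hpair : ∀ a b : ℝ, a ∈ Icc (0:ℝ) 1 → b ∈ Icc (0:ℝ) 1 → b - a ∉ N → a - b ∉ N →
      μ' (F' (-a) ⁻¹' P ∩ F' (-b) ⁻¹' P) = 0 := by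
    have key : ∀ a b : ℝ, a ≤ b → b - a ∈ Icc (0:ℝ) 1 → b - a ∉ N →
        μ' (F' (-a) ⁻¹' P ∩ F' (-b) ⁻¹' P) = 0 := by
      intro a b hab hmem hN'
      have hset : F' (-a) ⁻¹' P ∩ F' (-b) ⁻¹' P = F' (-b) ⁻¹' (P ∩ F' (b - a) ⁻¹' P) := by
        ext x
        simp only [mem_preimage, mem_inter_iff]
        have : F' (b - a) (F' (-b) x) = F' (-a) x := by
          rw [← hF'add (b - a) (-b) x]; ring_nf
        rw [this]
        tauto
      rw [hset]
      exact hflowinv _ _ (hlag _ hmem hN')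
    intro a b ha hb h1 h2
    rcases le_total a b with hab | hab
    · refine key a b hab ?_ h1
      simp only [mem_Icc] at ha hb ⊢
      constructor <;> linarith [ha.1, ha.2, hb.1, hb.2]
    · rw [inter_comm]
      refine key b a hab ?_ h2
      simp only [mem_Icc] at ha hb ⊢
      constructor <;> linarith [ha.1, ha.2, hb.1, hb.2]
  -- find a level set of times with positive outer measure
  set R : ℕ → ℕ → Set ℝ := fun m k =>
    {ρ | ρ ∈ Icc (0:ℝ) 1 ∧ ((k:ℝ≥0∞))⁻¹ < μ' (F' (-ρ) ⁻¹' P ∩ spanningSets μ' m)} with hRdef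
  have hcover : Icc (0:ℝ) 1 ⊆ ⋃ (m : ℕ), ⋃ (k : ℕ), R m k := by
    intro ρ hρ
    have hpos := hpreP (-ρ)
    obtain ⟨m, hm⟩ : ∃ m, 0 < μ' (F' (-ρ) ⁻¹' P ∩ spanningSets μ' m) := by
      by_contra hc
      push_neg at hc
      have hzero : ∀ m, μ' (F' (-ρ) ⁻¹' P ∩ spanningSets μ' m) = 0 :=
        fun m => le_antisymm (hc m) zero_le
      have : F' (-ρ) ⁻¹' P = ⋃ m, (F' (-ρ) ⁻¹' P ∩ spanningSets μ' m) := by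
        rw [← inter_iUnion, iUnion_spanningSets, inter_univ]
      have h0 : μ' (F' (-ρ) ⁻¹' P) = 0 := by
        rw [this]; exact measure_iUnion_null hzero
      exact absurd h0 (ne_of_gt hpos)
    obtain ⟨k, hk⟩ := ENNReal.exists_inv_nat_lt (ne_of_gt hm)
    exact mem_iUnion.2 ⟨m, mem_iUnion.2 ⟨k, hρ, hk⟩⟩
  obtain ⟨m, k, hmk⟩ : ∃ m k, volume (R m k) ≠ 0 := by
    by_contra hc
    push_neg at hc
    have h0 : volume (⋃ (m : ℕ), ⋃ (k : ℕ), R m k) = 0 :=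
      measure_iUnion_null fun m => measure_iUnion_null fun k => hc m k
    have h1 : volume (Icc (0:ℝ) 1) = 0 := measure_mono_null hcover h0
    rw [Real.volume_Icc] at h1
    simp at h1
  have hk0 : k ≠ 0 := by
    intro hk
    apply hmk
    have : R m k = ∅ := by
      ext ρ
      simp only [hRdef, mem_setOf_eq, hk, Nat.cast_zero, ENNReal.inv_zero, mem_empty_iff_false,
        iff_false, not_and]
      intro _
      exact fun hc => absurd hc (by simp)
    rw [this]; simp
  set c : ℝ≥0∞ := ((k:ℝ≥0∞))⁻¹ with hcdef
  have hc0 : c ≠ 0 := ENNReal.inv_ne_zero.2 (ENNReal.natCast_ne_top k)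
  have hcT : c ≠ ∞ := by
    rw [hcdef, ENNReal.inv_ne_top]
    exact_mod_cast hk0
  -- arbitrarily long finite a.e.-disjoint families
  have htuple : ∀ M : ℕ, ∃ f : Fin M → ℝ, (∀ i, f i ∈ R m k) ∧
      ∀ i j, i ≠ j → μ' (F' (-f i) ⁻¹' P ∩ F' (-f j) ⁻¹' P) = 0 := by
    intro M
    induction M with
    | zero => exact ⟨fun i => i.elim0, fun i => i.elim0, fun i => i.elim0⟩
    | succ M ih =>
      obtain ⟨f, hfR, hfP⟩ := ih
      set Forb : Set ℝ :=
        ⋃ i : Fin M, ((fun ρ => ρ - f i) ⁻¹' N ∪ (fun ρ => f i - ρ) ⁻¹' N) with hForbdef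
      have hForb : volume Forb = 0 := by
        refine measure_iUnion_null fun i => measure_union_null ?_ ?_
        · exact (measurePreserving_sub_right volume (f i)).quasiMeasurePreserving.preimage_null hN
        · exact ((measurePreserving_add_left volume (f i)).comp
            (Measure.measurePreserving_neg volume)).quasiMeasurePreserving.preimage_null hN
      have hnon : (R m k \ Forb).Nonempty := by
        apply nonempty_of_measure_ne_zero (μ := volume)
        intro h0
        apply hmk
        have : volume (R m k) ≤ volume (R m k \ Forb) + volume Forb :=
          (measure_mono (by intro ρ hρ; by_cases h : ρ ∈ Forb
                            · exact Or.inr h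
                            · exact Or.inl ⟨hρ, h⟩ : R m k ⊆ (R m k \ Forb) ∪ Forb)).trans
            (measure_union_le _ _)
        rw [h0, hForb] at this
        simpa using this
      obtain ⟨b, hbR, hbF⟩ := hnon
      refine ⟨Fin.snoc f b, ?_, ?_⟩
      · intro i
        refine Fin.lastCases ?_ ?_ i
        · simpa using hbR
        · intro j; simpa using hfR j
      · have hmix : ∀ j : Fin M, μ' (F' (-b) ⁻¹' P ∩ F' (-f j) ⁻¹' P) = 0 := by
          intro j
          have h1 : f j - b ∉ N := by
            intro hc
            exact hbF (mem_iUnion.2 ⟨j, Or.inr hc⟩)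
          have h2 : b - f j ∉ N := by
            intro hc
            exact hbF (mem_iUnion.2 ⟨j, Or.inl hc⟩)
          exact hpair b (f j) (hbR.1) (hfR j).1 h1 h2
        intro i j hij
        rcases Fin.eq_castSucc_or_eq_last i with ⟨i', rfl⟩ | rfl
        · rcases Fin.eq_castSucc_or_eq_last j with ⟨j', rfl⟩ | rfl
          · simp only [Fin.snoc_castSucc]
            refine hfP i' j' fun hc => hij (by rw [hc])
          · simp only [Fin.snoc_last, Fin.snoc_castSucc]
            rw [inter_comm]
            exact hmix i'
        · rcases Fin.eq_castSucc_or_eq_last j with ⟨j', rfl⟩ | rfl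
          · simp only [Fin.snoc_last, Fin.snoc_castSucc]
            exact hmix j'
          · exact absurd rfl hij
  -- derive the contradiction with σ-finiteness
  have hEfin : μ' (spanningSets μ' m) ≠ ∞ := (measure_spanningSets_lt_top μ' m).ne
  obtain ⟨M, hM⟩ := ENNReal.exists_nat_gt (ENNReal.div_lt_top hEfin hc0).ne
  obtain ⟨f, hfR, hfP⟩ := htuple M
  set Y : Fin M → Set X' := fun i => F' (-f i) ⁻¹' P ∩ spanningSets μ' m with hYdef
  have hYm : ∀ i, MeasurableSet (Y i) :=
    fun i => (hPm.preimage (hFm (-f i))).inter (measurableSet_spanningSets μ' m)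
  have hYd : Pairwise (Function.onFun (AEDisjoint μ') Y) := by
    intro i j hij
    refine measure_mono_null ?_ (hfP i j hij)
    intro x hx
    exact ⟨hx.1.1, hx.2.1⟩
  have hsum : μ' (⋃ i, Y i) = ∑' i, μ' (Y i) :=
    measure_iUnion₀ hYd fun i => (hYm i).nullMeasurableSet
  have hle : μ' (⋃ i, Y i) ≤ μ' (spanningSets μ' m) :=
    measure_mono (iUnion_subset fun i => fun x hx => hx.2)
  have hlow : (M : ℝ≥0∞) * c ≤ ∑' i, μ' (Y i) := by
    calc (M : ℝ≥0∞) * c = ∑' _ : Fin M, c := by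
          rw [tsum_fintype]
          simp [Finset.sum_const, nsmul_eq_mul]
      _ ≤ ∑' i, μ' (Y i) := ENNReal.tsum_le_tsum fun i => (hfR i).2.le
  have hcontr : (M : ℝ≥0∞) * c ≤ μ' (spanningSets μ' m) := hlow.trans (hsum ▸ hle)
  have hlt : μ' (spanningSets μ' m) < (M : ℝ≥0∞) * c :=
    (ENNReal.div_lt_iff (Or.inl hc0) (Or.inl hcT)).1 hM
  exact absurd hcontr (not_le.2 hlt)


/-- monotonicity of `lamSet` in the set argument -/
lemma lamSet_mono {X : Type*} (F : ℝ → X → X) {A B : Set X} (h : A ⊆ B) (δ s : ℝ) :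
    lamSet F A δ s ⊆ lamSet F B δ s := by
  intro x hx
  obtain ⟨hxA, t, ht1, ht2, htA⟩ := hx
  exact ⟨h hxA, t, ht1, ht2, h htA⟩



theorem stmt_2 {X X' : Type*} [MeasurableSpace X] [MeasurableSpace X']
    (μ : Measure X) (μ' : Measure X') [SigmaFinite μ] [SigmaFinite μ']
    (T : X' ≃ᵐ X) (hμ1 : μ'.map T ≪ μ) (hμ2 : μ ≪ μ'.map T)
    (F : ℝ → X → X) (F' : ℝ → X' → X')
    (hFmeas : Measurable (fun p : ℝ × X => F p.1 p.2))
    (hF0 : ∀ x, F 0 x = x)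
    (hFadd : ∀ s t : ℝ, ∀ x, F (s + t) x = F s (F t x))
    (hFns : ∀ t : ℝ, Measure.QuasiMeasurePreserving (F t) μ μ)
    (hF'meas : Measurable (fun p : ℝ × X' => F' p.1 p.2))
    (hF'0 : ∀ x, F' 0 x = x)
    (hF'add : ∀ s t : ℝ, ∀ x, F' (s + t) x = F' s (F' t x))
    (hF'ns : ∀ t : ℝ, Measure.QuasiMeasurePreserving (F' t) μ' μ')
    (hconj : ∀ t : ℝ, ∀ᵐ x ∂μ', T (F' t x) = F t (T x))
    (hB : PropertyB μ F) : PropertyB μ' F' := by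
  classical
  obtain ⟨A, hAm, hApos, hAlim⟩ := hB
  set ν : Measure X := μ'.map T with hνdef
  haveI : SigmaFinite ν := T.sigmaFinite_map
  have hν : ∀ {S : Set X}, MeasurableSet S → ν S = μ' (⇑T ⁻¹' S) := fun hS =>
    Measure.map_apply T.measurable hS
  -- a good subset of A with finite measure for both μ and ν
  obtain ⟨B, hBm, hBsub, hBpos, hBfin, hBνfin⟩ := exists_good_subset μ ν hAm hApos
  set P : Set X' := ⇑T ⁻¹' B with hPdef
  have hPm : MeasurableSet P := hBm.preimage T.measurable
  have hPpos : 0 < μ' P := by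
    rcases eq_or_lt_of_le (zero_le (a := μ' P)) with h | h
    · exfalso
      have h0 : ν B = 0 := by rw [hν hBm]; exact h.symm
      exact absurd (hμ2 h0) (ne_of_gt hBpos)
    · exact h
  -- the sojourn function
  set soj : X' → ℝ≥0∞ := fun x => volume {ρ | ρ ∈ Icc (0:ℝ) 1 ∧ F' ρ x ∈ P} with hsojdef
  have hsojm : Measurable soj := by
    have hW₂m : MeasurableSet {p : X' × ℝ | p.2 ∈ Icc (0:ℝ) 1 ∧ F' p.2 p.1 ∈ P} := by
      exact (measurable_snd measurableSet_Icc).inter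
        ((hF'meas.comp measurable_swap) hPm)
    exact measurable_measure_prodMk_left hW₂m
  have hsoj_pos := sojourn_pos μ' F' hF'meas hF'0 hF'add hF'ns hPm hPpos
  -- extract a level set
  obtain ⟨k, hk⟩ : ∃ k : ℕ, μ' {x | x ∈ P ∧ ((k:ℝ≥0∞))⁻¹ < soj x} ≠ 0 := by
    by_contra hc
    push_neg at hc
    have hsub : {x | x ∈ P ∧ 0 < volume {ρ | ρ ∈ Icc (0:ℝ) 1 ∧ F' ρ x ∈ P}} ⊆
        ⋃ k : ℕ, {x | x ∈ P ∧ ((k:ℝ≥0∞))⁻¹ < soj x} := by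
      intro x hx
      obtain ⟨k, hk⟩ := ENNReal.exists_inv_nat_lt (ne_of_gt hx.2)
      exact mem_iUnion.2 ⟨k, hx.1, hk⟩
    have h0 : μ' (⋃ k : ℕ, {x | x ∈ P ∧ ((k:ℝ≥0∞))⁻¹ < soj x}) = 0 :=
      measure_iUnion_null hc
    exact absurd (measure_mono_null hsub h0) (ne_of_gt hsoj_pos)
  set c : ℝ≥0∞ := ((k:ℝ≥0∞))⁻¹ with hcdef
  have hc0 : c ≠ 0 := ENNReal.inv_ne_zero.2 (ENNReal.natCast_ne_top k)
  set A'₀ : Set X' := {x | x ∈ P ∧ c < soj x} with hA'₀def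
  have hA'₀m : MeasurableSet A'₀ := hPm.inter (hsojm measurableSet_Ioi)
  have hA'₀pos : 0 < μ' A'₀ := lt_of_le_of_ne zero_le (Ne.symm hk)
  -- the itinerary comparison set
  set S1 : Set (X' × ℝ) := {p | F p.2 (T p.1) ∈ B} with hS1def
  set S2 : Set (X' × ℝ) := {p | F' p.2 p.1 ∈ P} with hS2def
  have hS1m : MeasurableSet S1 :=
    (hFmeas.comp ((measurable_snd).prodMk (T.measurable.comp measurable_fst))) hBm
  have hS2m : MeasurableSet S2 :=
    (hF'meas.comp (measurable_snd.prodMk measurable_fst)) hPm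
  set W₃ : Set (X' × ℝ) := (S1 \ S2) ∪ (S2 \ S1) with hW₃def
  have hW₃m : MeasurableSet W₃ := (hS1m.diff hS2m).union (hS2m.diff hS1m)
  set g : ℕ → X' → ℝ≥0∞ := fun n x =>
    volume (Prod.mk x ⁻¹' (W₃ ∩ {p : X' × ℝ | p.2 ∈ Icc (-(n:ℝ)) n})) with hgdef
  have hWn : ∀ n : ℕ, MeasurableSet (W₃ ∩ {p : X' × ℝ | p.2 ∈ Icc (-(n:ℝ)) n}) :=
    fun n => hW₃m.inter (measurable_snd measurableSet_Icc)
  have hgm : ∀ n, Measurable (g n) := fun n => measurable_measure_prodMk_left (hWn n)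
  have hΩae : ∀ n : ℕ, ∀ᵐ x ∂μ', g n x = 0 := by
    intro n
    have hslice : ∀ ρ : ℝ,
        μ' ((fun x => (x, ρ)) ⁻¹' (W₃ ∩ {p : X' × ℝ | p.2 ∈ Icc (-(n:ℝ)) n})) = 0 := by
      intro ρ
      have hnull : μ' {x | ¬ T (F' ρ x) = F ρ (T x)} = 0 := ae_iff.1 (hconj ρ)
      refine measure_mono_null ?_ hnull
      intro x hx
      simp only [mem_preimage, mem_inter_iff, hW₃def, hS1def, hS2def, mem_union, mem_diff,
        mem_setOf_eq] at hx
      intro heq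
      have hiff : (F ρ (T x) ∈ B) ↔ (F' ρ x ∈ P) := by
        rw [hPdef, mem_preimage, heq]
      rcases hx.1 with ⟨h1, h2⟩ | ⟨h1, h2⟩
      · exact h2 (hiff.1 h1)
      · exact h2 (hiff.2 h1)
    have hprod : (μ'.prod volume) (W₃ ∩ {p : X' × ℝ | p.2 ∈ Icc (-(n:ℝ)) n}) = 0 := by
      rw [Measure.prod_apply_symm (hWn n)]
      have : (fun ρ : ℝ => μ' ((fun x => (x, ρ)) ⁻¹'
          (W₃ ∩ {p : X' × ℝ | p.2 ∈ Icc (-(n:ℝ)) n}))) = fun _ => 0 := funext hslice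
      rw [this]
      simp
    have := Measure.prod_apply (μ := μ') (ν := volume) (hWn n)
    rw [hprod] at this
    exact (lintegral_eq_zero_iff (hgm n)).1 this.symm
  set Ω : Set X' := ⋂ n : ℕ, (g n) ⁻¹' {0} with hΩdef
  have hΩm : MeasurableSet Ω :=
    MeasurableSet.iInter fun n => (hgm n) (measurableSet_singleton 0)
  have hΩc : μ' Ωᶜ = 0 := by
    rw [hΩdef, compl_iInter]
    exact measure_iUnion_null fun n => by
      have := ae_iff.1 (hΩae n)
      exact this
  set A' : Set X' := A'₀ ∩ Ω with hA'def
  have hA'm : MeasurableSet A' := hA'₀m.inter hΩm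
  have hA'pos : 0 < μ' A' := by
    have hle : μ' A'₀ ≤ μ' A' + μ' Ωᶜ := by
      refine le_trans (measure_mono ?_) (measure_union_le _ _)
      intro x hx
      by_cases h : x ∈ Ω
      · exact Or.inl ⟨hx, h⟩
      · exact Or.inr h
    rw [hΩc, add_zero] at hle
    exact lt_of_lt_of_le hA'₀pos hle
  refine ⟨A', hA'm, hA'pos, ?_⟩
  intro δ hδ
  -- the comparison sets on the X side
  have h2δ : (0:ℝ) < 2*δ := by linarith
  set bigf : ℝ → ℝ≥0∞ := fun s => μ (lamSet F A (2*δ) s) with hbigdef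
  have hbig : limsup bigf atTop = 0 := hAlim (2*δ) h2δ
  have htb : Tendsto bigf atTop (𝓝 0) :=
    tendsto_of_le_liminf_of_limsup_le zero_le (le_of_eq hbig)
  set Lam : ℝ → Set X := fun s => toMeasurable μ (lamSet F B (2*δ) s) ∩ B with hLamdef
  have hLamm : ∀ s, MeasurableSet (Lam s) :=
    fun s => (measurableSet_toMeasurable _ _).inter hBm
  have hLamsub : ∀ s, lamSet F B (2*δ) s ⊆ Lam s := fun s x hx =>
    ⟨subset_toMeasurable _ _ hx, hx.1⟩
  have hLamle : ∀ s, μ (Lam s) ≤ bigf s := by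
    intro s
    calc μ (Lam s) ≤ μ (toMeasurable μ (lamSet F B (2*δ) s)) := measure_mono inter_subset_left
      _ = μ (lamSet F B (2*δ) s) := measure_toMeasurable _
      _ ≤ bigf s := measure_mono (lamSet_mono F hBsub _ _)
  have htLam : Tendsto (fun s => μ (Lam s)) atTop (𝓝 0) :=
    tendsto_of_tendsto_of_tendsto_of_le_of_le tendsto_const_nhds htb
      (fun s => zero_le) hLamle
  -- Radon-Nikodym machinery
  set gd : X → ℝ≥0∞ := ν.rnDeriv μ with hgddef
  have hgdm : Measurable gd := Measure.measurable_rnDeriv ν μ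
  have hwd : μ.withDensity gd = ν := Measure.withDensity_rnDeriv_eq ν μ hμ1
  have hgdint : ∀ {S : Set X}, MeasurableSet S → ν S = ∫⁻ x in S, gd x ∂μ := by
    intro S hS
    rw [← hwd, withDensity_apply gd hS]
  set tail : ℕ → ℝ≥0∞ := fun M => ∫⁻ x in {y | (M:ℝ≥0∞) < gd y} ∩ B, gd x ∂μ with htaildef
  have hgtm : ∀ M : ℕ, MeasurableSet {y | (M:ℝ≥0∞) < gd y} :=
    fun M => measurableSet_lt measurable_const hgdm
  have hindrw : ∀ (M : ℕ) {S : Set X}, MeasurableSet S →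
      ∫⁻ x in S, ({y | (M:ℝ≥0∞) < gd y}).indicator gd x ∂μ =
        ∫⁻ x in {y | (M:ℝ≥0∞) < gd y} ∩ S, gd x ∂μ := by
    intro M S hS
    rw [lintegral_indicator (hgtm M), Measure.restrict_restrict (hgtm M)]
  have hbound : ∀ (M : ℕ) (s : ℝ), ν (Lam s) ≤ (M:ℝ≥0∞) * μ (Lam s) + tail M := by
    intro M s
    have hpt : ∀ x, gd x ≤ (M:ℝ≥0∞) + ({y | (M:ℝ≥0∞) < gd y}).indicator gd x := by
      intro x
      rcases le_or_gt (gd x) (M:ℝ≥0∞) with h | h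
      · exact h.trans le_self_add
      · have : ({y | (M:ℝ≥0∞) < gd y}).indicator gd x = gd x :=
          Set.indicator_of_mem (show x ∈ {y | (M:ℝ≥0∞) < gd y} from h) gd
        rw [this]
        exact le_add_self
    calc ν (Lam s) = ∫⁻ x in Lam s, gd x ∂μ := hgdint (hLamm s)
      _ ≤ ∫⁻ x in Lam s, ((M:ℝ≥0∞) + ({y | (M:ℝ≥0∞) < gd y}).indicator gd x) ∂μ :=
          lintegral_mono fun x => hpt x
      _ = (M:ℝ≥0∞) * μ (Lam s) +
          ∫⁻ x in Lam s, ({y | (M:ℝ≥0∞) < gd y}).indicator gd x ∂μ := by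
          rw [lintegral_add_left measurable_const, setLIntegral_const]
      _ ≤ (M:ℝ≥0∞) * μ (Lam s) +
          ∫⁻ x in B, ({y | (M:ℝ≥0∞) < gd y}).indicator gd x ∂μ := by
          gcongr
          exact inter_subset_right
      _ = (M:ℝ≥0∞) * μ (Lam s) + tail M := by rw [hindrw M hBm]
  have hBνne : ν B ≠ ∞ := hBνfin.ne
  have htail : Tendsto tail atTop (𝓝 0) := by
    have hfin : ∫⁻ x, gd x ∂(μ.restrict B) ≠ ∞ := by
      have : ∫⁻ x, gd x ∂(μ.restrict B) = ν B := (hgdint hBm).symm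
      rw [this]; exact hBνne
    have h0 : Tendsto (fun M : ℕ =>
        ∫⁻ x, ({y | (M:ℝ≥0∞) < gd y}).indicator gd x ∂(μ.restrict B)) atTop
        (𝓝 (∫⁻ _, (0:ℝ≥0∞) ∂(μ.restrict B))) := by
      refine tendsto_lintegral_of_dominated_convergence gd
        (fun M => hgdm.indicator (hgtm M)) (fun M => Eventually.of_forall ?_) hfin ?_
      · exact fun x => indicator_le_self _ _ x
      · filter_upwards [ae_restrict_of_ae (Measure.rnDeriv_lt_top ν μ)] with x hx
        obtain ⟨M₀, hM₀⟩ := ENNReal.exists_nat_gt hx.ne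
        refine tendsto_atTop_of_eventually_const (i₀ := M₀) ?_
        intro M hM
        refine indicator_of_notMem ?_ gd
        simp only [mem_setOf_eq, not_lt]
        calc gd x ≤ (M₀:ℝ≥0∞) := hM₀.le
          _ ≤ (M:ℝ≥0∞) := by exact_mod_cast Nat.cast_le.2 hM
    have htail_eq : tail = fun M : ℕ =>
        ∫⁻ x, ({y | (M:ℝ≥0∞) < gd y}).indicator gd x ∂(μ.restrict B) :=
      funext fun M => (hindrw M hBm).symm
    rw [htail_eq]
    simpa using h0
  -- the key inclusion
  have hincl : ∀ᶠ s in atTop, μ' (lamSet F' A' δ s) ≤ ν (Lam s) := by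
    have hδ1 : (0:ℝ) < Real.exp δ - 1 := by
      have := Real.exp_lt_exp.2 hδ
      rw [Real.exp_zero] at this
      linarith
    filter_upwards [eventually_ge_atTop (2*δ + 1 - Real.log (Real.exp δ - 1))] with s hs
    have hkey : 1 ≤ Real.exp (s - 2*δ) * (Real.exp δ - 1) := by
      have hrw : Real.exp (s - 2*δ) * (Real.exp δ - 1) =
          Real.exp (s - 2*δ + Real.log (Real.exp δ - 1)) := by
        rw [Real.exp_add, Real.exp_log hδ1]
      rw [hrw]
      have h1 : (0:ℝ) ≤ s - 2*δ + Real.log (Real.exp δ - 1) := by linarith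
      exact Real.one_le_exp h1
    have hexp_pos : (0:ℝ) < Real.exp (s - 2*δ) := Real.exp_pos _
    have heq1 : Real.exp (s - δ) = Real.exp (s - 2*δ) * Real.exp δ := by
      rw [← Real.exp_add]; ring_nf
    have heq2 : Real.exp (s + 2*δ) = Real.exp (s + δ) * Real.exp δ := by
      rw [← Real.exp_add]; ring_nf
    have hmono : Real.exp (s - 2*δ) ≤ Real.exp (s + δ) := Real.exp_le_exp.2 (by linarith)
    have h1 : Real.exp (s - 2*δ) + 1 ≤ Real.exp (s - δ) := by nlinarith
    have h2 : Real.exp (s + δ) + 1 ≤ Real.exp (s + 2*δ) := by nlinarith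
    have hsubset : lamSet F' A' δ s ⊆ ⇑T ⁻¹' (Lam s) := by
      intro x hx
      obtain ⟨hxA', t, ht1, ht2, hy⟩ := hx
      have hxP : x ∈ P := hxA'.1.1
      have hxΩ : x ∈ Ω := hxA'.2
      have hysoj : c < soj (F' t x) := hy.1.2
      -- the sojourn set near time t
      set Sv : Set ℝ := {v | v ∈ Icc t (t+1) ∧ F' v x ∈ P} with hSvdef
      have hSvm : MeasurableSet Sv := by
        have : Sv = Icc t (t+1) ∩ (fun v => F' v x) ⁻¹' P := rfl
        rw [this]
        exact measurableSet_Icc.inter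
          ((hF'meas.comp (measurable_id.prodMk measurable_const)) hPm)
      have hSv_vol : volume Sv = soj (F' t x) := by
        have hpre : (fun ρ => ρ + t) ⁻¹' Sv =
            {ρ | ρ ∈ Icc (0:ℝ) 1 ∧ F' ρ (F' t x) ∈ P} := by
          ext ρ
          simp only [mem_preimage, hSvdef, mem_setOf_eq, mem_Icc]
          constructor
          · rintro ⟨⟨ha, hb⟩, hc⟩
            refine ⟨⟨by linarith, by linarith⟩, ?_⟩
            rw [← hF'add ρ t x]
            exact hc
          · rintro ⟨⟨ha, hb⟩, hc⟩
            refine ⟨⟨by linarith, by linarith⟩, ?_⟩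
            rw [hF'add ρ t x]
            exact hc
        calc volume Sv = volume ((fun ρ => ρ + t) ⁻¹' Sv) :=
              ((measurePreserving_add_right volume t).measure_preimage
                hSvm.nullMeasurableSet).symm
          _ = soj (F' t x) := by rw [hpre]
      set SB : Set ℝ := {v | v ∈ Icc t (t+1) ∧ F v (T x) ∈ B} with hSBdef
      obtain ⟨n, hn⟩ := exists_nat_ge (|t| + 1)
      have hdiff : Sv \ SB ⊆ Prod.mk x ⁻¹' (W₃ ∩ {p : X' × ℝ | p.2 ∈ Icc (-(n:ℝ)) n}) := by
        intro v hv
        obtain ⟨⟨hvI, hvP⟩, hvnB⟩ := hv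
        have hFvB : F v (T x) ∉ B := fun hc => hvnB ⟨hvI, hc⟩
        constructor
        · exact Or.inr ⟨hvP, hFvB⟩
        · simp only [mem_setOf_eq, mem_Icc]
          simp only [mem_Icc] at hvI
          have h1 := neg_abs_le t
          have h2 := le_abs_self t
          constructor <;> linarith
      have hdiff0 : volume (Sv \ SB) = 0 := by
        refine measure_mono_null hdiff ?_
        have := mem_iInter.1 hxΩ n
        exact this
      have hSB0 : volume SB ≠ 0 := by
        intro h0
        have hcup : volume Sv ≤ volume SB + volume (Sv \ SB) := by
          refine le_trans (measure_mono ?_) (measure_union_le _ _)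
          intro v hv
          by_cases h : v ∈ SB
          · exact Or.inl h
          · exact Or.inr ⟨hv, h⟩
        rw [h0, hdiff0, add_zero] at hcup
        have hz : soj (F' t x) = 0 := le_antisymm (hSv_vol ▸ hcup) zero_le
        rw [hz] at hysoj
        exact absurd hysoj (by simp)
      obtain ⟨v, hvmem⟩ := nonempty_of_measure_ne_zero hSB0
      obtain ⟨hvI, hvB⟩ := hvmem
      simp only [mem_Icc] at hvI
      -- bounds on |v|
      have habs : Real.exp (s - 2*δ) < |v| ∧ |v| < Real.exp (s + 2*δ) := by
        rcases lt_trichotomy t 0 with htn | ht0 | htp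
        · have habs_t : |t| = -t := abs_of_neg htn
          rw [habs_t] at ht1 ht2
          have hv_neg : v < 0 := by linarith
          have habs_v : |v| = -v := abs_of_neg hv_neg
          rw [habs_v]
          constructor <;> linarith
        · exfalso
          rw [ht0] at ht1
          simp only [abs_zero] at ht1
          exact absurd ht1 (not_lt.2 (Real.exp_pos _).le)
        · have habs_t : |t| = t := abs_of_pos htp
          rw [habs_t] at ht1 ht2
          have hv_pos : 0 < v := by linarith
          have habs_v : |v| = v := abs_of_pos hv_pos
          rw [habs_v]
          constructor <;> linarith
      have hTxB : T x ∈ B := hxP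
      have hTx_lam : T x ∈ lamSet F B (2*δ) s := ⟨hTxB, v, habs.1, habs.2, hvB⟩
      exact hLamsub s hTx_lam
    calc μ' (lamSet F' A' δ s) ≤ μ' (⇑T ⁻¹' (Lam s)) := measure_mono hsubset
      _ = ν (Lam s) := (hν (hLamm s)).symm
  -- conclude
  refine le_antisymm ?_ zero_le
  have hL1 : limsup (fun s => μ' (lamSet F' A' δ s)) atTop ≤
      limsup (fun s => ν (Lam s)) atTop := limsup_le_limsup hincl
  have hL2 : ∀ M : ℕ, limsup (fun s => ν (Lam s)) atTop ≤ tail M := by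
    intro M
    have hconv : Tendsto (fun s => (M:ℝ≥0∞) * μ (Lam s) + tail M) atTop (𝓝 (tail M)) := by
      have hmul : Tendsto (fun s => (M:ℝ≥0∞) * μ (Lam s)) atTop (𝓝 0) := by
        have := ENNReal.Tendsto.const_mul (a := (M:ℝ≥0∞)) htLam
          (Or.inr (ENNReal.natCast_ne_top M))
        simpa using this
      have := hmul.add (tendsto_const_nhds (x := tail M))
      simpa using this
    calc limsup (fun s => ν (Lam s)) atTop ≤
        limsup (fun s => (M:ℝ≥0∞) * μ (Lam s) + tail M) atTop :=
          limsup_le_limsup (Eventually.of_forall (hbound M))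
      _ = tail M := hconv.limsup_eq
  exact ge_of_tendsto' htail fun M => hL1.trans (hL2 M)
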